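/- For every n ≥ 2 and R ≥ 0, there exists a configuration x = (C, J_1, …, J_n) ∈ M_n(R) that simultaneously has a folded arm (C = B_k for some k) and a stretched-out arm (|C − B_j| = 2 for some j) if and only if R = R_n. -/

import Mathlib

/-- Euclidean norm of a vector in ℝ². -/
noncomputable def enorm2 (v : ℝ × ℝ) : ℝ := Real.sqrt (v.1 ^ 2 + v.2 ^ 2)

/-- The k-th fixed endpoint `B_k = (R cos(2kπ/n), R sin(2kπ/n))` (indices from 0). -/
noncomputable def Bpt (n : ℕ) (R : ℝ) (k : Fin n) : ℝ × ℝ :=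
  (R * Real.cos (2 * (k.val : ℝ) * Real.pi / (n : ℝ)),
   R * Real.sin (2 * (k.val : ℝ) * Real.pi / (n : ℝ)))

/-- The configuration space `M_n(R)` of spiders with `n` arms of radius `R`,
as a subset of `(ℝ²)^{n+1} ≅ ℝ^{2n+2}`: a pair `(C, J)` with
`|C − J_k| = 1` and `|J_k − B_k| = 1` for all `k`. -/
noncomputable def MSpace (n : ℕ) (R : ℝ) : Set ((ℝ × ℝ) × (Fin n → ℝ × ℝ)) :=
  {x | ∀ k : Fin n, enorm2 (x.1 - x.2 k) = 1 ∧ enorm2 (x.2 k - Bpt n R k) = 1}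

/-- `d_n`, the maximum distance between `n`-th roots of unity. -/
noncomputable def dmax (n : ℕ) : ℝ :=
  if Even n then 2
  else Real.sqrt (2 - 2 * Real.cos (2 * ((n / 2 : ℕ) : ℝ) * Real.pi / (n : ℝ)))

/-- The critical radius `R_n = 2 / d_n`. -/
noncomputable def Rcrit (n : ℕ) : ℝ := 2 / dmax n


open Real

section Aux

open Real in
lemma exists_mid (P Q : ℝ × ℝ) (h : enorm2 (P - Q) ≤ 2) :
    ∃ J : ℝ × ℝ, enorm2 (P - J) = 1 ∧ enorm2 (J - Q) = 1 := by
  set u := P.1 - Q.1 with hu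
  set v := P.2 - Q.2 with hv
  set d := enorm2 (P - Q) with hdd
  have hd0 : 0 ≤ d := Real.sqrt_nonneg _
  have hd2 : d ^ 2 = u ^ 2 + v ^ 2 := by
    rw [hdd]; unfold enorm2
    rw [Real.sq_sqrt (by positivity)]
    simp [u, v]
  rcases eq_or_lt_of_le hd0 with h0 | h0
  · have hu0 : u = 0 := by nlinarith
    have hv0 : v = 0 := by nlinarith
    have h1 : P.1 = Q.1 := by rw [hu] at hu0; linarith
    have h2 : P.2 = Q.2 := by rw [hv] at hv0; linarith
    refine ⟨(Q.1 + 1, Q.2), ?_, ?_⟩ <;> unfold enorm2 <;>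
      simp only [Prod.fst_sub, Prod.snd_sub, h1, h2] <;> norm_num
  · -- d > 0
    set c : ℝ := Real.sqrt (1 - d ^ 2 / 4) / d with hc
    have hc2 : c ^ 2 * d ^ 2 = 1 - d ^ 2 / 4 := by
      rw [hc, div_pow, div_mul_cancel₀ _ (by positivity)]
      exact Real.sq_sqrt (by nlinarith)
    refine ⟨((P.1 + Q.1) / 2 - c * v, (P.2 + Q.2) / 2 + c * u), ?_, ?_⟩ <;>
      unfold enorm2 <;> simp only [Prod.fst_sub, Prod.snd_sub]
    · have : (P.1 - ((P.1 + Q.1) / 2 - c * v)) ^ 2 + (P.2 - ((P.2 + Q.2) / 2 + c * u)) ^ 2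
          = 1 := by
        have e : (P.1 - ((P.1 + Q.1) / 2 - c * v)) ^ 2 + (P.2 - ((P.2 + Q.2) / 2 + c * u)) ^ 2
            = (1 / 4 + c ^ 2) * (u ^ 2 + v ^ 2) := by rw [hu, hv]; ring
        rw [e, ← hd2]; nlinarith
      rw [this, Real.sqrt_one]
    · have : ((P.1 + Q.1) / 2 - c * v - Q.1) ^ 2 + ((P.2 + Q.2) / 2 + c * u - Q.2) ^ 2
          = 1 := by
        have e : ((P.1 + Q.1) / 2 - c * v - Q.1) ^ 2 + ((P.2 + Q.2) / 2 + c * u - Q.2) ^ 2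
            = (1 / 4 + c ^ 2) * (u ^ 2 + v ^ 2) := by rw [hu, hv]; ring
        rw [e, ← hd2]; nlinarith
      rw [this, Real.sqrt_one]


lemma enorm2_triangle (a b c : ℝ × ℝ) :
    enorm2 (a - c) ≤ enorm2 (a - b) + enorm2 (b - c) := by
  have key : ∀ v : ℝ × ℝ, enorm2 v = ‖(⟨v.1, v.2⟩ : ℂ)‖ := by
    intro v
    rw [Complex.norm_def, Complex.normSq_mk]
    unfold enorm2; congr 1; ring
  rw [key, key, key]
  have h1 : (⟨(a - c).1, (a - c).2⟩ : ℂ)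
      = (⟨(a - b).1, (a - b).2⟩ : ℂ) + ⟨(b - c).1, (b - c).2⟩ := by
    simp [Complex.ext_iff]
  rw [h1]
  exact norm_add_le _ _

lemma enorm2_B_sub (n : ℕ) (hn : 0 < n) (R : ℝ) (hR : 0 ≤ R) (k j : Fin n) :
    enorm2 (Bpt n R k - Bpt n R j)
      = R * Real.sqrt (2 - 2 * Real.cos (2 * ((k.val : ℝ) - (j.val : ℝ)) * π / (n : ℝ))) := by
  have hn' : (n : ℝ) ≠ 0 := Nat.cast_ne_zero.mpr hn.ne'
  set a := 2 * (k.val : ℝ) * π / n with ha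
  set b := 2 * (j.val : ℝ) * π / n with hb
  have hab : 2 * ((k.val : ℝ) - (j.val : ℝ)) * π / n = a - b := by
    rw [ha, hb]; field_simp
  rw [hab, Real.cos_sub]
  unfold enorm2 Bpt
  simp only [Prod.fst_sub, Prod.snd_sub]
  have key : (R * cos a - R * cos b) ^ 2 + (R * sin a - R * sin b) ^ 2
      = R ^ 2 * (2 - 2 * (cos a * cos b + sin a * sin b)) := by
    have h1 := Real.sin_sq_add_cos_sq a
    have h2 := Real.sin_sq_add_cos_sq b
    nlinarith [h1, h2]
  rw [key, Real.sqrt_mul (sq_nonneg R), Real.sqrt_sq hR]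

-- cos monotonicity helper: for t ≤ n/2
lemma cos_ge_aux (n : ℕ) (hn : 2 ≤ n) (t : ℕ) (ht : t ≤ n / 2) :
    Real.cos (2 * ((n / 2 : ℕ) : ℝ) * π / n) ≤ Real.cos (2 * (t : ℝ) * π / n) := by
  have hnp : (0 : ℝ) < n := by positivity
  have hm : 2 * (n / 2 : ℕ) ≤ n := by omega
  apply Real.cos_le_cos_of_nonneg_of_le_pi
  · positivity
  · rw [div_le_iff₀ hnp]
    have : (2 * (n / 2 : ℕ) : ℝ) ≤ n := by exact_mod_cast hm
    nlinarith [Real.pi_pos]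
  · have h1 : (t : ℝ) ≤ ((n / 2 : ℕ) : ℝ) := by exact_mod_cast ht
    have hpi := Real.pi_pos
    gcongr

lemma cos_ge (n : ℕ) (hn : 2 ≤ n) (t : ℕ) (ht : t ≤ n) :
    Real.cos (2 * ((n / 2 : ℕ) : ℝ) * π / n) ≤ Real.cos (2 * (t : ℝ) * π / n) := by
  rcases le_or_gt t (n / 2) with h | h
  · exact cos_ge_aux n hn t h
  · have hnp : (0 : ℝ) < n := by positivity
    have hn0 : (n : ℝ) ≠ 0 := hnp.ne'
    have heq : 2 * (t : ℝ) * π / n = 2 * π - 2 * ((n - t : ℕ) : ℝ) * π / n := by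
      have : ((n - t : ℕ) : ℝ) = (n : ℝ) - t := by
        have := Nat.cast_sub ht (R := ℝ); linarith [this]
      rw [this]; field_simp; ring
    rw [heq, Real.cos_two_pi_sub]
    exact cos_ge_aux n hn (n - t) (by omega)

lemma cos_ge' (n : ℕ) (hn : 2 ≤ n) (a b : ℕ) (ha : a ≤ n) (hb : b ≤ n) :
    Real.cos (2 * ((n / 2 : ℕ) : ℝ) * π / n) ≤ Real.cos (2 * ((a : ℝ) - (b : ℝ)) * π / n) := by
  rcases le_total b a with h | h
  · have : (a : ℝ) - b = ((a - b : ℕ) : ℝ) := by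
      rw [Nat.cast_sub h]
    rw [this]
    exact cos_ge n hn (a - b) (by omega)
  · have : 2 * ((a : ℝ) - b) * π / n = -(2 * ((b - a : ℕ) : ℝ) * π / n) := by
      rw [Nat.cast_sub h]; ring
    rw [this, Real.cos_neg]
    exact cos_ge n hn (b - a) (by omega)

lemma dmax_eq (n : ℕ) (hn : 2 ≤ n) :
    dmax n = Real.sqrt (2 - 2 * Real.cos (2 * ((n / 2 : ℕ) : ℝ) * π / n)) := by
  unfold dmax
  split_ifs with h
  · obtain ⟨m, hm⟩ := h
    have hm1 : 1 ≤ m := by omega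
    have hdiv : (m + m) / 2 = m := by omega
    subst hm
    rw [hdiv]
    have hm0 : ((m : ℝ)) ≠ 0 := by positivity
    have : 2 * (m : ℝ) * π / ((m + m : ℕ) : ℝ) = π := by
      push_cast; field_simp; ring
    rw [this, Real.cos_pi]
    rw [show (2 : ℝ) - 2 * (-1) = 2 ^ 2 by norm_num, Real.sqrt_sq (by norm_num)]
  · rfl

lemma dmax_pos (n : ℕ) (hn : 2 ≤ n) : 0 < dmax n := by
  rw [dmax_eq n hn]
  have hnp : (0 : ℝ) < n := by positivity
  have hm1 : 1 ≤ n / 2 := by omega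
  have hm : 2 * (n / 2 : ℕ) ≤ n := by omega
  have hpi := Real.pi_pos
  have harg : 0 < 2 * ((n / 2 : ℕ) : ℝ) * π / n := by
    have : (1 : ℝ) ≤ ((n / 2 : ℕ) : ℝ) := by exact_mod_cast hm1
    positivity
  have hle : 2 * ((n / 2 : ℕ) : ℝ) * π / n ≤ π := by
    rw [div_le_iff₀ hnp]
    have : (2 * (n / 2 : ℕ) : ℝ) ≤ n := by exact_mod_cast hm
    nlinarith
  have hcos : Real.cos (2 * ((n / 2 : ℕ) : ℝ) * π / n) < 1 := by
    have := Real.cos_lt_cos_of_nonneg_of_le_pi (le_refl 0) hle harg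
    rwa [Real.cos_zero] at this
  apply Real.sqrt_pos.mpr
  linarith


end Aux

/-- For `n ≥ 2` and `R ≥ 0`, there exists a configuration in `M_n(R)` that has
simultaneously a folded arm (`C = B_k` for some `k`) and a stretched-out arm
(`|C − B_j| = 2` for some `j`) if and only if `R = R_n`. -/
theorem stmt3 (n : ℕ) (hn : 2 ≤ n) (R : ℝ) (hR : 0 ≤ R) :
    (∃ x ∈ MSpace n R, (∃ k : Fin n, x.1 = Bpt n R k) ∧
        (∃ j : Fin n, enorm2 (x.1 - Bpt n R j) = 2)) ↔ R = Rcrit n := by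
  have hn0 : 0 < n := by omega
  have hnR : (0 : ℝ) < n := by positivity
  set m := n / 2 with hm
  set D := dmax n with hD
  have hDpos : 0 < D := dmax_pos n hn
  have hDeq : D = Real.sqrt (2 - 2 * Real.cos (2 * ((m : ℕ) : ℝ) * π / n)) := dmax_eq n hn
  have hmn : m < n := by omega
  constructor
  · rintro ⟨x, hx, ⟨k, hCk⟩, ⟨j, hj⟩⟩
    -- all arms have length ≤ 2
    have htri : ∀ i : Fin n, enorm2 (x.1 - Bpt n R i) ≤ 2 := by
      intro i
      have h1 := (hx i).1
      have h2 := (hx i).2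
      have := enorm2_triangle x.1 (x.2 i) (Bpt n R i)
      linarith
    -- upper bound : R * D ≤ 2
    have hub : R * D ≤ 2 := by
      set i : Fin n := ⟨(k.val + m) % n, Nat.mod_lt _ hn0⟩ with hi
      have hiv : i.val + n * ((k.val + m) / n) = k.val + m := Nat.mod_add_div _ _
      set q := (k.val + m) / n with hq
      have hcast : (k.val : ℝ) - (i.val : ℝ) = n * q - m := by
        have : (i.val : ℝ) + n * q = k.val + m := by exact_mod_cast hiv
        linarith
      have hang : 2 * ((k.val : ℝ) - (i.val : ℝ)) * π / n = q * (2 * π) - 2 * ((m : ℕ) : ℝ) * π / n := by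
        rw [hcast]; field_simp
      have hdist : enorm2 (Bpt n R k - Bpt n R i) = R * D := by
        rw [enorm2_B_sub n hn0 R hR k i, hang, Real.cos_nat_mul_two_pi_sub, hDeq]
      have := htri i
      rw [hCk, hdist] at this
      exact this
    -- lower bound : 2 ≤ R * D
    have hlb : 2 ≤ R * D := by
      rw [hCk] at hj
      rw [enorm2_B_sub n hn0 R hR k j] at hj
      have hc := cos_ge' n hn k.val j.val (le_of_lt k.isLt) (le_of_lt j.isLt)
      have hs : Real.sqrt (2 - 2 * Real.cos (2 * ((k.val : ℝ) - (j.val : ℝ)) * π / n)) ≤ D := by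
        rw [hDeq]
        apply Real.sqrt_le_sqrt
        linarith
      calc (2 : ℝ) = R * Real.sqrt (2 - 2 * Real.cos (2 * ((k.val : ℝ) - (j.val : ℝ)) * π / n)) := hj.symm
        _ ≤ R * D := by apply mul_le_mul_of_nonneg_left hs hR
    have hRD : R * D = 2 := le_antisymm hub hlb
    rw [Rcrit, ← hD, eq_div_iff hDpos.ne']
    exact hRD
  · intro hRe
    have hRD : R * D = 2 := by
      rw [hRe, Rcrit, ← hD, div_mul_cancel₀ _ hDpos.ne']
    set C := Bpt n R ⟨0, hn0⟩ with hC
    -- all distances from C are ≤ 2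
    have hle : ∀ i : Fin n, enorm2 (C - Bpt n R i) ≤ 2 := by
      intro i
      rw [hC, enorm2_B_sub n hn0 R hR ⟨0, hn0⟩ i]
      have hc := cos_ge' n hn 0 i.val (by omega) (le_of_lt i.isLt)
      have hs : Real.sqrt (2 - 2 * Real.cos (2 * ((0 : ℕ) - (i.val : ℝ)) * π / n)) ≤ D := by
        rw [hDeq]
        apply Real.sqrt_le_sqrt
        push_cast at hc ⊢
        linarith
      calc R * Real.sqrt (2 - 2 * Real.cos (2 * (((⟨0, hn0⟩ : Fin n).val : ℝ) - (i.val : ℝ)) * π / n))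
          ≤ R * D := by
            apply mul_le_mul_of_nonneg_left ?_ hR
            simpa using hs
        _ = 2 := hRD
    choose J hJ using fun i : Fin n => exists_mid C (Bpt n R i) (hle i)
    refine ⟨(C, J), ?_, ⟨⟨0, hn0⟩, rfl⟩, ⟨⟨m, hmn⟩, ?_⟩⟩
    · intro i
      exact hJ i
    · show enorm2 (C - Bpt n R ⟨m, hmn⟩) = 2
      rw [hC, enorm2_B_sub n hn0 R hR ⟨0, hn0⟩ ⟨m, hmn⟩]
      have hneg : 2 * (((⟨0, hn0⟩ : Fin n).val : ℝ) - ((⟨m, hmn⟩ : Fin n).val : ℝ)) * π / n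
          = -(2 * ((m : ℕ) : ℝ) * π / n) := by
        simp; ring
      rw [hneg, Real.cos_neg, ← hDeq, hRD]
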